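/- Let p ∈ (1,∞) and δ ≥ 0, and let φ = φ_{p,δ}. Then φ' is differentiable on (0,∞) and for every t > 0 (and δ ≥ 0 with δ + t > 0) its derivative satisfies min{1, p−1}·(δ+t)^{p−2} ≤ (φ')'(t) ≤ max{1, p−1}·(δ+t)^{p−2}; i.e., φ is a balanced N-function. -/

import Mathlib

/-- The N-function derivative `φ'(s) = (δ + s)^(p-2) * s` (real power). -/
noncomputable def phiDeriv (p δ s : ℝ) : ℝ := (δ + s) ^ (p - 2) * s

/-- For `p ∈ (1,∞)` and `δ ≥ 0`, the derivative `φ'` of the N-function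
`φ = φ_{p,δ}` is differentiable at every `t > 0`, and its derivative satisfies
`min 1 (p-1) * (δ+t)^(p-2) ≤ (φ')'(t) ≤ max 1 (p-1) * (δ+t)^(p-2)`,
i.e., `φ` is a balanced N-function. -/
theorem stmt0 (p δ : ℝ) (hp : 1 < p) (hδ : 0 ≤ δ) :
    ∀ t : ℝ, 0 < t →
      DifferentiableAt ℝ (phiDeriv p δ) t ∧
      min 1 (p - 1) * (δ + t) ^ (p - 2) ≤ deriv (phiDeriv p δ) t ∧
      deriv (phiDeriv p δ) t ≤ max 1 (p - 1) * (δ + t) ^ (p - 2) := by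
  intro t ht
  have hd : 0 < δ + t := by linarith
  have h1 : HasDerivAt (fun s : ℝ => δ + s) 1 t := by
    simpa using (hasDerivAt_id t).const_add δ
  have h2 : HasDerivAt (fun s : ℝ => (δ + s) ^ (p - 2))
      ((p - 2) * (δ + t) ^ (p - 2 - 1) * 1) t :=
    (Real.hasDerivAt_rpow_const (Or.inl hd.ne')).comp t h1
  have h3 : HasDerivAt (phiDeriv p δ)
      ((p - 2) * (δ + t) ^ (p - 2 - 1) * 1 * t + (δ + t) ^ (p - 2) * 1) t := by
    exact h2.mul (hasDerivAt_id' t)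
  have hA : 0 < (δ + t) ^ (p - 2) := Real.rpow_pos_of_pos hd _
  have hsub : (δ + t) ^ (p - 2 - 1) = (δ + t) ^ (p - 2) / (δ + t) :=
    Real.rpow_sub_one hd.ne' _
  have hD : deriv (phiDeriv p δ) t
      = (δ + t) ^ (p - 2) * ((p - 1) * t + δ) / (δ + t) := by
    rw [h3.deriv, hsub]
    field_simp
    ring
  refine ⟨h3.differentiableAt, ?_, ?_⟩
  · rw [hD, le_div_iff₀ hd]
    have hlow : min 1 (p - 1) * (δ + t) ≤ (p - 1) * t + δ := by
      rcases le_total (p - 1) 1 with h | h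
      · rw [min_eq_right h]; nlinarith
      · rw [min_eq_left h]; nlinarith
    nlinarith [mul_le_mul_of_nonneg_left hlow hA.le]
  · rw [hD, div_le_iff₀ hd]
    have hhigh : (p - 1) * t + δ ≤ max 1 (p - 1) * (δ + t) := by
      rcases le_total (p - 1) 1 with h | h
      · rw [max_eq_left h]; nlinarith
      · rw [max_eq_right h]; nlinarith
    nlinarith [mul_le_mul_of_nonneg_left hhigh hA.le]
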